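/- For each maximal losing coalition T of a simple game v, the game u_T defined by weights w_i = 0 for i ∈ T, w_i = 1 for i ∉ T, and quota q = 1 is a weighted game in which T is losing and every winning coalition of v is winning; moreover v equals the intersection of the games u_T over all maximal losing coalitions T. -/
import Mathlib


def IsSimpleGame {N : Type*} [Fintype N] (v : Finset N → Prop) : Prop :=
  (∀ S T : Finset N, S ⊆ T → v S → v T) ∧ ¬ v ∅ ∧ v Finset.univ

def IsWeighted {N : Type*} [Fintype N] (v : Finset N → Prop) : Prop :=
  ∃ (w : N → ℝ) (q : ℝ), 0 < q ∧ (∀ i, 0 ≤ w i) ∧ ∀ S : Finset N, v S ↔ q ≤ ∑ i ∈ S, w i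

def IsMaxLosing {N : Type*} [Fintype N] (v : Finset N → Prop) (T : Finset N) : Prop :=
  ¬ v T ∧ ∀ T' : Finset N, T ⊂ T' → v T'

def IsMinWinning {N : Type*} [Fintype N] (v : Finset N → Prop) (S : Finset N) : Prop :=
  v S ∧ ∀ S' : Finset N, S' ⊂ S → ¬ v S'

lemma sum_indicator_eq {N : Type*} [Fintype N] [DecidableEq N] (S T : Finset N) :
    ∑ i ∈ S, (if i ∈ T then (0 : ℝ) else 1) = (S \ T).card := by
  rw [Finset.sum_ite, Finset.sum_const, Finset.sum_const]
  simp [Finset.filter_not, Finset.sdiff_eq_filter]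

lemma one_le_iff {N : Type*} [Fintype N] [DecidableEq N] (S T : Finset N) :
    (1 : ℝ) ≤ ∑ i ∈ S, (if i ∈ T then (0 : ℝ) else 1) ↔ ¬ S ⊆ T := by
  rw [sum_indicator_eq]
  rw [show ((1:ℝ) ≤ ((S \ T).card : ℝ)) ↔ 1 ≤ (S \ T).card by exact_mod_cast Iff.rfl]
  rw [Nat.one_le_iff_ne_zero]
  simp [Finset.card_eq_zero, Finset.sdiff_eq_empty_iff_subset]

lemma exists_maxLosing_superset {N : Type*} [Fintype N] [DecidableEq N]
    (v : Finset N → Prop) :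
    ∀ n (S : Finset N), Sᶜ.card = n → ¬ v S → ∃ T, S ⊆ T ∧ IsMaxLosing v T := by
  intro n
  induction n using Nat.strong_induction_on with
  | _ n ih =>
    intro S hcard hS
    by_cases h : ∀ T', S ⊂ T' → v T'
    · exact ⟨S, subset_rfl, hS, h⟩
    · push_neg at h
      obtain ⟨T', hST', hT'⟩ := h
      have hlt : T'ᶜ.card < n := by
        rw [← hcard]
        exact Finset.card_lt_card (by simpa using hST')
      obtain ⟨T, hT, hmax⟩ := ih _ hlt T' rfl hT'
      exact ⟨T, hST'.subset.trans hT, hmax⟩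

/-- For each maximal losing coalition T, the game with weights 0 on T, 1 off T and
quota 1 is weighted, T is losing in it, every winning coalition of v is winning in it,
and v is the intersection of these games over all maximal losing coalitions. -/
theorem maximal_losing_intersection_representation {N : Type*} [Fintype N] [DecidableEq N]
    (v : Finset N → Prop) (hv : IsSimpleGame v) :
    (∀ T : Finset N, IsMaxLosing v T →
      (IsWeighted (fun S : Finset N => (1 : ℝ) ≤ ∑ i ∈ S, if i ∈ T then (0 : ℝ) else 1) ∧
        ¬ ((1 : ℝ) ≤ ∑ i ∈ T, if i ∈ T then (0 : ℝ) else 1) ∧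
        ∀ S : Finset N, v S → (1 : ℝ) ≤ ∑ i ∈ S, if i ∈ T then (0 : ℝ) else 1)) ∧
    (∀ S : Finset N, v S ↔
      ∀ T : Finset N, IsMaxLosing v T →
        (1 : ℝ) ≤ ∑ i ∈ S, if i ∈ T then (0 : ℝ) else 1) := by
  obtain ⟨hmono, hempty, huniv⟩ := hv
  have key : ∀ S T : Finset N, IsMaxLosing v T → v S →
      (1 : ℝ) ≤ ∑ i ∈ S, if i ∈ T then (0 : ℝ) else 1 := by
    intro S T hT hS
    rw [one_le_iff]
    intro hsub
    exact hT.1 (hmono S T hsub hS)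
  constructor
  · intro T hT
    refine ⟨⟨fun i => if i ∈ T then 0 else 1, 1, one_pos,
      fun i => by positivity, fun S => Iff.rfl⟩, ?_, fun S hS => key S T hT hS⟩
    rw [one_le_iff]
    simp
  · intro S
    constructor
    · exact fun hS T hT => key S T hT hS
    · intro h
      by_contra hS
      obtain ⟨T, hST, hmax⟩ := exists_maxLosing_superset v Sᶜ.card S rfl hS
      have := h T hmax
      rw [one_le_iff] at this
      exact this hST
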